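/- Let X_f be a discrete random variable and S a binary random variable with 0 < P(S=1) < 1. Then any binary decision variable Ŷ_f that is a function of X_f satisfies SP(Ŷ_f, S) ≤ 1 − H_b^{-1}(H(S|X_f)) / max(P(S=1), P(S=0)), where SP(Ŷ_f,S) = P(Ŷ_f=1|S=1) − P(Ŷ_f=1|S=0). -/

import Mathlib

open Finset Classical Real

open Classical in
/-- Probability of event `E` under weight function `p` on a finite sample space. -/
noncomputable def Pr {Ω : Type*} [Fintype Ω] (p : Ω → ℝ) (E : Ω → Prop) : ℝ :=
  ∑ ω, if E ω then p ω else 0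

/-- Conditional probability `P(A | B)`. -/
noncomputable def cPr {Ω : Type*} [Fintype Ω] (p : Ω → ℝ) (A B : Ω → Prop) : ℝ :=
  Pr p (fun ω => A ω ∧ B ω) / Pr p B

/-- Statistical parity `SP(Ŷ,S) = P(Ŷ=1|S=1) - P(Ŷ=1|S=0)`. -/
noncomputable def SP {Ω : Type*} [Fintype Ω] (p : Ω → ℝ) (Yhat S : Ω → Bool) : ℝ :=
  cPr p (fun ω => Yhat ω = true) (fun ω => S ω = true)
    - cPr p (fun ω => Yhat ω = true) (fun ω => S ω = false)

/-- Balanced error rate `BER(Ŷ,S) = ½P(Ŷ=1|S=0) + ½P(Ŷ=0|S=1)`. -/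
noncomputable def BER {Ω : Type*} [Fintype Ω] (p : Ω → ℝ) (Yhat S : Ω → Bool) : ℝ :=
  (1/2) * cPr p (fun ω => Yhat ω = true) (fun ω => S ω = false)
    + (1/2) * cPr p (fun ω => Yhat ω = false) (fun ω => S ω = true)

/-- Binary entropy in bits. -/
noncomputable def Hb (q : ℝ) : ℝ :=
  -(q * Real.logb 2 q) - (1 - q) * Real.logb 2 (1 - q)

/-- Conditional entropy `H(S|Z) = E_z[H_b(P(S=1|Z=z))]`. -/
noncomputable def condEnt {Ω 𝒳 : Type*} [Fintype Ω] [Fintype 𝒳] (p : Ω → ℝ)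
    (S : Ω → Bool) (Z : Ω → 𝒳) : ℝ :=
  ∑ z : 𝒳, Pr p (fun ω => Z ω = z) * Hb (cPr p (fun ω => S ω = true) (fun ω => Z ω = z))

/-- The inverse of `H_b` restricted to `[0, 1/2]`. -/
noncomputable def HbInv (y : ℝ) : ℝ :=
  sSup {q : ℝ | q ∈ Set.Icc (0:ℝ) (1/2) ∧ Hb q = y}

/-! ### Auxiliary lemmas -/

lemma Hb_eq_binEntropy (q : ℝ) : Hb q = Real.binEntropy q / Real.log 2 := by
  simp only [Hb, Real.binEntropy, Real.logb, Real.log_inv]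
  ring

lemma Hb_one_sub (q : ℝ) : Hb (1 - q) = Hb q := by
  rw [Hb_eq_binEntropy, Hb_eq_binEntropy, Real.binEntropy_one_sub]

lemma Hb_concaveOn : ConcaveOn ℝ (Set.Icc 0 1) Hb := by
  have h := (Real.strictConcave_binEntropy.concaveOn).smul
    (c := (Real.log 2)⁻¹) (by positivity)
  have heq : Hb = fun x => (Real.log 2)⁻¹ • Real.binEntropy x := by
    funext x
    simp [Hb_eq_binEntropy, smul_eq_mul, div_eq_inv_mul]
  rw [heq]
  exact h

lemma Hb_mono {a b : ℝ} (ha : 0 ≤ a) (hab : a ≤ b) (hb : b ≤ 1/2) : Hb a ≤ Hb b := by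
  rw [Hb_eq_binEntropy, Hb_eq_binEntropy]
  have hlog : (0:ℝ) < Real.log 2 := Real.log_pos (by norm_num)
  have hmono : Real.binEntropy a ≤ Real.binEntropy b :=
    Real.binEntropy_strictMonoOn.monotoneOn
      ⟨ha, by norm_num; linarith⟩ ⟨ha.trans hab, by norm_num; linarith⟩ hab
  gcongr

lemma Pr_nonneg {Ω : Type*} [Fintype Ω] {p : Ω → ℝ} (hp : ∀ ω, 0 ≤ p ω) (E : Ω → Prop) :
    0 ≤ Pr p E := by
  refine Finset.sum_nonneg fun ω _ => ?_
  split <;> simp [hp ω]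

lemma Pr_mono {Ω : Type*} [Fintype Ω] {p : Ω → ℝ} (hp : ∀ ω, 0 ≤ p ω) {E F : Ω → Prop}
    (h : ∀ ω, E ω → F ω) : Pr p E ≤ Pr p F := by
  refine Finset.sum_le_sum fun ω _ => ?_
  by_cases hE : E ω
  · simp [hE, h ω hE]
  · simp only [hE, if_false]
    split <;> simp [hp ω]

lemma cPr_nonneg {Ω : Type*} [Fintype Ω] {p : Ω → ℝ} (hp : ∀ ω, 0 ≤ p ω) (A B : Ω → Prop) :
    0 ≤ cPr p A B :=
  div_nonneg (Pr_nonneg hp _) (Pr_nonneg hp _)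

lemma cPr_le_one {Ω : Type*} [Fintype Ω] {p : Ω → ℝ} (hp : ∀ ω, 0 ≤ p ω) (A B : Ω → Prop) :
    cPr p A B ≤ 1 := by
  rcases eq_or_lt_of_le (Pr_nonneg hp B) with h | h
  · simp [cPr, ← h]
  · rw [cPr, div_le_one h]
    exact Pr_mono hp fun ω hω => hω.2

lemma cPr_mul {Ω : Type*} [Fintype Ω] (p : Ω → ℝ) (A B : Ω → Prop)
    (h : Pr p B ≠ 0) : cPr p A B * Pr p B = Pr p (fun ω => A ω ∧ B ω) := by
  rw [cPr, div_mul_cancel₀ _ h]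

/-- for any decision `Ŷ_f` that is a function of `X_f`,
`SP(Ŷ_f,S) ≤ 1 - H_b⁻¹(H(S|X_f)) / max(P(S=1), P(S=0))`. -/
theorem stmt4 {Ω 𝒳 : Type*} [Fintype Ω] [Fintype 𝒳] (p : Ω → ℝ) (hp : ∀ ω, 0 ≤ p ω)
    (hsum : ∑ ω, p ω = 1) (S Yf : Ω → Bool) (Xf : Ω → 𝒳)
    (g : 𝒳 → Bool) (hg : Yf = fun ω => g (Xf ω))
    (hS1 : 0 < Pr p (fun ω => S ω = true)) (hS1' : Pr p (fun ω => S ω = true) < 1)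
    (hSPnn : 0 ≤ SP p Yf S) :
    SP p Yf S ≤ 1 - HbInv (condEnt p S Xf)
      / max (Pr p (fun ω => S ω = true)) (Pr p (fun ω => S ω = false)) := by
  classical
  set a1 := Pr p (fun ω => S ω = true) with ha1
  set a0 := Pr p (fun ω => S ω = false) with ha0
  -- a0 = 1 - a1
  have hsplitS : a1 + a0 = 1 := by
    rw [ha1, ha0, Pr, Pr, ← Finset.sum_add_distrib, ← hsum]
    refine Finset.sum_congr rfl fun ω _ => ?_
    cases hS : S ω <;> simp [hS]
  have ha0pos : 0 < a0 := by linarith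
  set m := max a1 a0 with hm
  have hmpos : 0 < m := lt_max_of_lt_left hS1
  set α := cPr p (fun ω => Yf ω = true) (fun ω => S ω = false) with hα
  set β := cPr p (fun ω => Yf ω = false) (fun ω => S ω = true) with hβ
  have hαnn : 0 ≤ α := cPr_nonneg hp _ _
  have hβnn : 0 ≤ β := cPr_nonneg hp _ _
  -- 1 - SP = α + β
  have hSP : SP p Yf S = 1 - (α + β) := by
    have hsplit1 : Pr p (fun ω => Yf ω = true ∧ S ω = true)
        + Pr p (fun ω => Yf ω = false ∧ S ω = true) = a1 := by
      rw [ha1, Pr, Pr, Pr, ← Finset.sum_add_distrib]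
      refine Finset.sum_congr rfl fun ω _ => ?_
      cases hY : Yf ω <;> cases hS : S ω <;> simp [hY, hS]
    have h1 : cPr p (fun ω => Yf ω = true) (fun ω => S ω = true) = 1 - β := by
      rw [hβ, cPr, cPr, eq_sub_iff_add_eq, ← add_div, ← ha1, ← hsplit1,
        div_self (by rw [hsplit1]; exact hS1.ne')]
    rw [SP, h1, ← hα]; ring
  have hSPle : α + β ≤ 1 := by
    have h1 : 0 ≤ SP p Yf S := hSPnn
    rw [hSP] at h1; linarith
  set t := m * (1 - SP p Yf S) with ht
  have htnn : 0 ≤ t := by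
    rw [ht, hSP]
    have := hmpos.le
    nlinarith
  -- It suffices to show HbInv (condEnt) ≤ t
  suffices hkey : HbInv (condEnt p S Xf) ≤ t by
    have h2 : HbInv (condEnt p S Xf) / m ≤ 1 - SP p Yf S := by
      rw [div_le_iff₀ hmpos, mul_comm]; exact hkey
    linarith
  by_cases htc : (1:ℝ)/2 ≤ t
  · -- trivial case : HbInv ≤ 1/2 ≤ t
    refine (Real.sSup_le (fun q hq => ?_) (by norm_num)).trans htc
    exact hq.1.2
  push_neg at htc
  -- Fano's inequality : condEnt ≤ Hb t
  set w : 𝒳 → ℝ := fun x => Pr p (fun ω => Xf ω = x) with hw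
  set q : 𝒳 → ℝ := fun x => cPr p (fun ω => S ω = true) (fun ω => Xf ω = x) with hq
  set e : 𝒳 → ℝ := fun x => if g x = true then 1 - q x else q x with he
  have hwnn : ∀ x, 0 ≤ w x := fun x => Pr_nonneg hp _
  have hwsum : ∑ x, w x = 1 := by
    simp only [hw, Pr]
    rw [Finset.sum_comm, ← hsum]
    refine Finset.sum_congr rfl fun ω _ => ?_
    simp
  have hq01 : ∀ x, q x ∈ Set.Icc (0:ℝ) 1 := fun x =>
    ⟨cPr_nonneg hp _ _, cPr_le_one hp _ _⟩
  have he01 : ∀ x, e x ∈ Set.Icc (0:ℝ) 1 := by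
    intro x
    obtain ⟨h0, h1⟩ := hq01 x
    simp only [he]
    split <;> constructor <;> linarith
  -- w x * q x = P(S=1 ∧ X=x)
  have hwq : ∀ x, w x * q x = Pr p (fun ω => S ω = true ∧ Xf ω = x) := by
    intro x
    rcases eq_or_lt_of_le (hwnn x) with h | h
    · have hle : Pr p (fun ω => S ω = true ∧ Xf ω = x) ≤ w x :=
        Pr_mono hp fun ω hω => hω.2
      have h2 : Pr p (fun ω => S ω = true ∧ Xf ω = x) = 0 :=
        le_antisymm (hle.trans_eq h.symm) (Pr_nonneg hp _)
      rw [← h, zero_mul, h2]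
    · simp only [hq]
      rw [mul_comm]
      exact cPr_mul _ _ _ h.ne' 
  have hsplitX : ∀ x, w x = Pr p (fun ω => S ω = true ∧ Xf ω = x)
      + Pr p (fun ω => S ω = false ∧ Xf ω = x) := by
    intro x
    rw [hw]; simp only [Pr]
    rw [← Finset.sum_add_distrib]
    refine Finset.sum_congr rfl fun ω _ => ?_
    rcases Bool.eq_false_or_eq_true (S ω) with hS | hS <;>
      by_cases hX : Xf ω = x <;> simp [hS, hX]
  have hwe : ∀ x, w x * e x = if g x = true then Pr p (fun ω => S ω = false ∧ Xf ω = x)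
      else Pr p (fun ω => S ω = true ∧ Xf ω = x) := by
    intro x
    simp only [he]
    split
    · rw [mul_sub, mul_one, hwq, hsplitX x]; ring
    · exact hwq x
  set E := ∑ x, w x * e x with hE
  have hEnn : 0 ≤ E := Finset.sum_nonneg fun x _ =>
    mul_nonneg (hwnn x) (he01 x).1
  -- E = P(Ŷ=1 ∧ S=0) + P(Ŷ=0 ∧ S=1)
  have hEeq : E = Pr p (fun ω => Yf ω = true ∧ S ω = false)
      + Pr p (fun ω => Yf ω = false ∧ S ω = true) := by
    rw [hE]
    calc ∑ x, w x * e x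
        = ∑ x, ∑ ω, (if Xf ω = x then
            (if g (Xf ω) = true then (if S ω = false then p ω else 0)
              else (if S ω = true then p ω else 0)) else 0) := by
          refine Finset.sum_congr rfl fun x _ => ?_
          rw [hwe x]
          split <;> rename_i hgx <;> simp only [Pr] <;>
            refine Finset.sum_congr rfl fun ω _ => ?_ <;>
            by_cases hX : Xf ω = x <;> simp [hX, hgx] <;> tauto
      _ = ∑ ω, (if g (Xf ω) = true then (if S ω = false then p ω else 0)
            else (if S ω = true then p ω else 0)) := by
          rw [Finset.sum_comm]
          refine Finset.sum_congr rfl fun ω _ => ?_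
          simp
      _ = _ := by
          simp only [Pr, ← Finset.sum_add_distrib, hg]
          refine Finset.sum_congr rfl fun ω _ => ?_
          cases hY : g (Xf ω) <;> cases hS : S ω <;> simp [hY, hS]
  -- E ≤ t
  have hEle : E ≤ t := by
    have h1 : Pr p (fun ω => Yf ω = true ∧ S ω = false) = α * a0 := by
      rw [hα, cPr_mul _ _ _ ha0pos.ne']
    have h2 : Pr p (fun ω => Yf ω = false ∧ S ω = true) = β * a1 := by
      rw [hβ, cPr_mul _ _ _ hS1.ne']
    have hma0 : a0 ≤ m := le_max_right _ _
    have hma1 : a1 ≤ m := le_max_left _ _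
    rw [hEeq, h1, h2, ht, hSP]
    ring_nf
    nlinarith [mul_le_mul_of_nonneg_left hma0 hαnn, mul_le_mul_of_nonneg_left hma1 hβnn]
  -- Jensen : condEnt ≤ Hb E
  have hJensen : condEnt p S Xf ≤ Hb E := by
    have h1 : condEnt p S Xf = ∑ x, w x • Hb (e x) := by
      rw [condEnt]
      refine Finset.sum_congr rfl fun x _ => ?_
      rw [smul_eq_mul]
      congr 1
      simp only [he]
      split
      · rw [Hb_one_sub]
      · rfl
    have h2 := Hb_concaveOn.le_map_sum (t := Finset.univ) (w := w) (p := e)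
      (fun x _ => hwnn x) hwsum (fun x _ => he01 x)
    have hE2 : E = ∑ x, w x • e x := by
      rw [hE]
      exact Finset.sum_congr rfl fun x _ => (smul_eq_mul ..).symm
    rw [h1, hE2]
    exact h2
  have hfano : condEnt p S Xf ≤ Hb t :=
    hJensen.trans (Hb_mono hEnn hEle htc.le)
  -- conclude via monotonicity of Hb on [0, 1/2]
  refine Real.sSup_le (fun u hu => ?_) htnn
  obtain ⟨⟨hu0, hu2⟩, huH⟩ := hu
  by_contra hcon
  push_neg at hcon
  have hlt : Hb t < Hb u := by
    rw [Hb_eq_binEntropy, Hb_eq_binEntropy]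
    have hlog : (0:ℝ) < Real.log 2 := by positivity
    apply div_lt_div_of_pos_right ?_ hlog |>.trans_eq rfl
    · exact Real.binEntropy_strictMonoOn ⟨htnn, by norm_num; linarith⟩
        ⟨hu0, by norm_num; linarith⟩ hcon
  rw [huH] at hlt
  exact absurd hfano (not_le.mpr hlt)
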